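/- Fix α ∈ (2/3, 1). Then α·p_c + (1 − α)/2 = (1 − √(α·(3α−2)))/2; in particular the normalising constant c_α := 2/(1 − √(α·(3α−2))) satisfies c_α ∈ (0, ∞) and c_α^{−1} = α·p_c + (1/2)·∑_{m=1}^∞ p_m. -/

import Mathlib

/-- The peeling probability `p_m` for a hyperbolic half-planar triangulation with
parameter `α`:  `p_m = (2/4^m) ((2m-2)!/((m-1)!(m+1)!)) (2/α - 2)^m ((3α-2)m + 1)`. -/
noncomputable def peelP (α : ℝ) (m : ℕ) : ℝ :=
  (2 / 4 ^ m) *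
    ((Nat.factorial (2 * m - 2) : ℝ) /
      ((Nat.factorial (m - 1) : ℝ) * (Nat.factorial (m + 1) : ℝ))) *
    (2 / α - 2) ^ m * ((3 * α - 2) * m + 1)

/-- The critical site-percolation probability `p_c = (1/2)(1 - √(3 - 2/α))`. -/
noncomputable def pcrit (α : ℝ) : ℝ := (1 / 2) * (1 - Real.sqrt (3 - 2 / α))

/-- The normalising constant `c_α = 2/(1 - √(α(3α-2)))`. -/
noncomputable def cAlpha (α : ℝ) : ℝ := 2 / (1 - Real.sqrt (α * (3 * α - 2)))

/-- The increment law `μ` of the peeling random walk: `μ(1) = c_α α p_c`,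
`μ(-m) = (1/2) c_α p_m` for `m ≥ 1`, and `μ(i) = 0` otherwise. -/
noncomputable def incLaw (α : ℝ) : ℤ → ℝ := fun i =>
  if i = 1 then cAlpha α * α * pcrit α
  else if i ≤ -1 then (1 / 2) * cAlpha α * peelP α (-i).toNat
  else 0

open Filter
lemma fact_le_four_pow (n : ℕ) :
    (2 * n).factorial ≤ 4 ^ n * n.factorial * (n + 1).factorial := by
  induction n with
  | zero => simp
  | succ n ih =>
    have h : 2 * (n + 1) = (2 * n + 1) + 1 := by ring
    rw [h, Nat.factorial_succ, Nat.factorial_succ]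
    calc (2 * n + 1 + 1) * ((2 * n + 1) * (2 * n).factorial)
        ≤ (2 * n + 1 + 1) * ((2 * n + 1) * (4 ^ n * n.factorial * (n + 1).factorial)) := by
          gcongr
      _ = ((2 * n + 1 + 1) * (2 * n + 1)) * (4 ^ n * n.factorial * (n + 1).factorial) := by
          ring
      _ ≤ (4 * ((n + 1 + 1) * (n + 1))) * (4 ^ n * n.factorial * (n + 1).factorial) :=
          Nat.mul_le_mul (by nlinarith) le_rfl
      _ = 4 ^ (n + 1) * (n + 1).factorial * (n + 1 + 1).factorial := by
          rw [Nat.factorial_succ (n + 1), Nat.factorial_succ n]; ring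

noncomputable def auxT (α : ℝ) (n : ℕ) : ℝ :=
  (1 - α) * ((1 - α) / (2 * α)) ^ n *
    (((2 * n).factorial : ℝ) / ((n.factorial : ℝ) * ((n + 1).factorial : ℝ)))

lemma peelP_telescope {α : ℝ} (hα : α ∈ Set.Ioo (2 / 3 : ℝ) 1) (m : ℕ) :
    peelP α (m + 1) = auxT α m - auxT α (m + 1) := by
  have hα0 : (0:ℝ) < α := lt_trans (by norm_num) hα.1
  have e1 : 2 * (m + 1) - 2 = 2 * m := by omega
  have e2 : m + 1 - 1 = m := by omega
  have hf1 : (((2 * (m + 1)).factorial : ℕ) : ℝ)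
      = (2 * m + 2) * ((2 * m + 1) * ((2 * m).factorial : ℝ)) := by
    have h : 2 * (m + 1) = (2 * m + 1) + 1 := by ring
    rw [h, Nat.factorial_succ, Nat.factorial_succ]; push_cast; ring
  have hf2 : (((m + 1 + 1).factorial : ℕ) : ℝ) = (m + 2) * ((m + 1).factorial : ℝ) := by
    rw [Nat.factorial_succ]; push_cast; ring
  have hf3 : (((m + 1).factorial : ℕ) : ℝ) = (m + 1) * (m.factorial : ℝ) := by
    rw [Nat.factorial_succ]; push_cast; ring
  have hb : (2 / α - 2) = 4 * ((1 - α) / (2 * α)) := by field_simp; ring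
  have hm0 : (m.factorial : ℝ) ≠ 0 := Nat.cast_ne_zero.mpr (Nat.factorial_ne_zero _)
  have hm1 : ((m + 1).factorial : ℝ) ≠ 0 := Nat.cast_ne_zero.mpr (Nat.factorial_ne_zero _)
  have hαne : α ≠ 0 := ne_of_gt hα0
  simp only [peelP, auxT, e1, e2, hf1, hf2, hf3, hb, mul_pow]
  field_simp
  rw [pow_succ]
  push_cast
  field_simp
  ring


/-- `α p_c + (1-α)/2 = (1 - √(α(3α-2)))/2`; in particular the normalising constant
`c_α = 2/(1 - √(α(3α-2)))` is positive and satisfies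
`c_α⁻¹ = α p_c + (1/2) ∑_{m=1}^∞ p_m`. -/
theorem cAlpha_normalisation (α : ℝ) (hα : α ∈ Set.Ioo (2 / 3 : ℝ) 1) :
    α * pcrit α + (1 - α) / 2 = (1 - Real.sqrt (α * (3 * α - 2))) / 2 ∧
    0 < cAlpha α ∧
    (cAlpha α)⁻¹ = α * pcrit α + (1 / 2) * ∑' m : ℕ, peelP α (m + 1) := by
  obtain ⟨hαl, hαu⟩ := hα
  have hα0 : (0:ℝ) < α := lt_trans (by norm_num) hαl
  have h32 : (0:ℝ) < 3 * α - 2 := by linarith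
  -- sqrt relation
  have hsq : α * Real.sqrt (3 - 2 / α) = Real.sqrt (α * (3 * α - 2)) := by
    have h1 : α * (3 * α - 2) = α ^ 2 * (3 - 2 / α) := by field_simp
    rw [h1, Real.sqrt_mul (sq_nonneg α), Real.sqrt_sq hα0.le]
  have part1 : α * pcrit α + (1 - α) / 2 = (1 - Real.sqrt (α * (3 * α - 2))) / 2 := by
    rw [pcrit, ← hsq]; ring
  have hprod_lt : α * (3 * α - 2) < 1 := by nlinarith
  have hs_lt : Real.sqrt (α * (3 * α - 2)) < 1 := by
    calc Real.sqrt (α * (3 * α - 2)) < Real.sqrt 1 :=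
          Real.sqrt_lt_sqrt (mul_nonneg hα0.le h32.le) hprod_lt
      _ = 1 := Real.sqrt_one
  have hc_pos : 0 < cAlpha α := by
    rw [cAlpha]; exact div_pos two_pos (by linarith)
  -- the tsum
  have hsum : HasSum (fun m : ℕ => peelP α (m + 1)) (1 - α) := by
    have hnonneg : ∀ m : ℕ, 0 ≤ peelP α (m + 1) := by
      intro m
      have h1 : (0:ℝ) ≤ 2 / 4 ^ (m + 1) := by positivity
      have h2 : (0:ℝ) ≤ (Nat.factorial (2 * (m + 1) - 2) : ℝ) /
          ((Nat.factorial (m + 1 - 1) : ℝ) * (Nat.factorial (m + 1 + 1) : ℝ)) :=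
        div_nonneg (Nat.cast_nonneg _) (mul_nonneg (Nat.cast_nonneg _) (Nat.cast_nonneg _))
      have h3 : (0:ℝ) ≤ (2 / α - 2) ^ (m + 1) := by
        apply pow_nonneg
        have : 2 < 2 / α := by
          rw [lt_div_iff₀ hα0]; nlinarith
        linarith
      have h4 : (0:ℝ) ≤ (3 * α - 2) * (m + 1 : ℕ) + 1 := by positivity
      exact mul_nonneg (mul_nonneg (mul_nonneg h1 h2) h3) h4
    rw [hasSum_iff_tendsto_nat_of_nonneg hnonneg]
    have hps : ∀ n : ℕ, ∑ i ∈ Finset.range n, peelP α (i + 1) = auxT α 0 - auxT α n := by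
      intro n
      rw [← Finset.sum_range_sub' (auxT α) n]
      exact Finset.sum_congr rfl fun i _ => peelP_telescope ⟨hαl, hαu⟩ i
    simp only [hps]
    have ht0 : auxT α 0 = 1 - α := by simp [auxT]
    have hT : Tendsto (auxT α) atTop (nhds 0) := by
      have hr0 : (0:ℝ) ≤ 2 * (1 - α) / α := by
        apply div_nonneg (by linarith) hα0.le
      have hr1 : 2 * (1 - α) / α < 1 := by
        rw [div_lt_one hα0]; linarith
      have hgeo : Tendsto (fun n : ℕ => (1 - α) * (2 * (1 - α) / α) ^ n) atTop (nhds 0) := by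
        have := tendsto_pow_atTop_nhds_zero_of_lt_one hr0 hr1
        simpa using this.const_mul (1 - α)
      apply squeeze_zero (fun n => ?_) (fun n => ?_) hgeo
      · have hb' : (0:ℝ) ≤ (1 - α) / (2 * α) :=
          div_nonneg (by linarith) (by linarith)
        unfold auxT
        apply mul_nonneg (mul_nonneg (by linarith) (pow_nonneg hb' n))
        exact div_nonneg (Nat.cast_nonneg _) (mul_nonneg (Nat.cast_nonneg _) (Nat.cast_nonneg _))
      · unfold auxT
        have hb : (0:ℝ) ≤ (1 - α) / (2 * α) := by
          apply div_nonneg (by linarith) (by linarith)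
        have hfle : (((2 * n).factorial : ℕ) : ℝ) / ((n.factorial : ℝ) * ((n + 1).factorial : ℝ))
            ≤ 4 ^ n := by
          rw [div_le_iff₀ (by positivity)]
          calc (((2 * n).factorial : ℕ) : ℝ)
              ≤ ((4 ^ n * n.factorial * (n + 1).factorial : ℕ) : ℝ) := by
                exact_mod_cast fact_le_four_pow n
            _ = 4 ^ n * ((n.factorial : ℝ) * ((n + 1).factorial : ℝ)) := by push_cast; ring
        calc (1 - α) * ((1 - α) / (2 * α)) ^ n *
              (((2 * n).factorial : ℝ) / ((n.factorial : ℝ) * ((n + 1).factorial : ℝ)))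
            ≤ (1 - α) * ((1 - α) / (2 * α)) ^ n * 4 ^ n := by
              apply mul_le_mul_of_nonneg_left hfle
              apply mul_nonneg (by linarith) (pow_nonneg hb n)
          _ = (1 - α) * (2 * (1 - α) / α) ^ n := by
              rw [mul_assoc, ← mul_pow]
              congr 2
              field_simp; ring
    rw [show (1 - α : ℝ) = auxT α 0 - 0 by rw [ht0]; ring]
    exact tendsto_const_nhds.sub hT
  have htsum : ∑' m : ℕ, peelP α (m + 1) = 1 - α := hsum.tsum_eq
  refine ⟨part1, hc_pos, ?_⟩
  rw [htsum, cAlpha, inv_div]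
  linarith [part1]
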